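/- For $n \geq 4$, the non-commuting graph of the quasidihedral group $QD_{2^n}$ is the complete $(2^{n-2}+1)$-partite graph $K_{2^{n-1}-2, 2, 2, \ldots, 2}$ (with $2^{n-2}$ parts of size $2$). -/

import Mathlib

/-- The non-commuting graph of a group. -/
def noncommGraph (G : Type*) [Group G] :
    SimpleGraph {g : G // g ∉ Subgroup.center G} where
  Adj u v := u.1 * v.1 ≠ v.1 * u.1
  symm := ⟨fun _ _ h e => h e.symm⟩
  loopless := ⟨fun _ h => h rfl⟩

/-- Relations of the quasidihedral group
`QD_{2^n} = ⟨a, b : a^(2^(n-1)) = b² = 1, b a b⁻¹ = a^(2^(n-2)-1)⟩`. -/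
def qdRels (n : ℕ) : Set (FreeGroup (Fin 2)) :=
  { (FreeGroup.of 0) ^ (2 ^ (n - 1)), (FreeGroup.of 1) ^ 2,
    FreeGroup.of 1 * FreeGroup.of 0 * (FreeGroup.of 1)⁻¹ *
      ((FreeGroup.of 0) ^ (2 ^ (n - 2) - 1))⁻¹ }

namespace QDP

@[ext] structure QD (n : ℕ) where
  i : ZMod (2 ^ (n - 1))
  e : ZMod 2
deriving DecidableEq

variable {n : ℕ}

def rr (n : ℕ) : ZMod (2 ^ (n - 1)) := 2 ^ (n - 2) - 1

def uu (n : ℕ) (ε : ZMod 2) : ZMod (2 ^ (n - 1)) := if ε = 0 then 1 else rr n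

lemma z2cases : ∀ ε : ZMod 2, ε = 0 ∨ ε = 1 := by decide

instance : NeZero (2 ^ (n - 1)) := ⟨pow_ne_zero _ two_ne_zero⟩

lemma cast_pow_eq (k : ℕ) : ((2 ^ k : ℕ) : ZMod (2 ^ (n - 1))) = (2 : ZMod (2 ^ (n - 1))) ^ k := by
  push_cast; ring

lemma two_mul_M (hn : 4 ≤ n) : (2 : ZMod (2 ^ (n - 1))) * 2 ^ (n - 2) = 0 := by
  have h : ((2 ^ (n - 1) : ℕ) : ZMod (2 ^ (n - 1))) = 0 := ZMod.natCast_self _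
  rw [cast_pow_eq] at h
  have hn1 : n - 1 = (n - 2) + 1 := by omega
  have key : (2 : ZMod (2 ^ (n - 1))) * 2 ^ (n - 2) = 2 ^ (n - 1) := by
    rw [hn1, pow_succ]; ring
  rw [key]; exact h

lemma Mpow : (2 : ZMod (2 ^ (n - 1))) ^ (n - 2) = ((2 ^ (n - 2) : ℕ) : ZMod (2 ^ (n - 1))) :=
  (cast_pow_eq _).symm

lemma rr_mul_rr (hn : 4 ≤ n) : rr n * rr n = 1 := by
  unfold rr
  have h2 : (2 : ZMod (2 ^ (n - 1))) * 2 ^ (n - 2) = 0 := two_mul_M hn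
  have hn2 : n - 2 = (n - 3) + 1 := by omega
  have h4 : (2 ^ (n - 2) : ZMod (2 ^ (n - 1))) * 2 ^ (n - 2) = 0 := by
    nth_rewrite 1 [hn2]
    rw [pow_succ]
    linear_combination ((2 : ZMod (2 ^ (n - 1))) ^ (n - 3)) * h2
  linear_combination h4 - h2

lemma uu_sq (hn : 4 ≤ n) (ε : ZMod 2) : uu n ε * uu n ε = 1 := by
  rcases z2cases ε with h | h <;> simp [uu, h, rr_mul_rr hn]

lemma uu_add (hn : 4 ≤ n) (ε δ : ZMod 2) : uu n (ε + δ) = uu n ε * uu n δ := by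
  have h11 : (1 + 1 : ZMod 2) = 0 := by decide
  rcases z2cases ε with h | h <;> rcases z2cases δ with h' | h' <;>
    simp [uu, h, h', h11, rr_mul_rr hn]

instance : Mul (QD n) := ⟨fun x y => ⟨x.i + uu n x.e * y.i, x.e + y.e⟩⟩
instance : One (QD n) := ⟨⟨0, 0⟩⟩
instance : Inv (QD n) := ⟨fun x => ⟨-(uu n x.e * x.i), x.e⟩⟩

lemma mul_def (x y : QD n) : x * y = ⟨x.i + uu n x.e * y.i, x.e + y.e⟩ := rfl
lemma one_def : (1 : QD n) = ⟨0, 0⟩ := rfl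
lemma inv_def (x : QD n) : x⁻¹ = ⟨-(uu n x.e * x.i), x.e⟩ := rfl

instance [hF : Fact (4 ≤ n)] : Group (QD n) :=
  Group.ofLeftAxioms
    (fun x y z => by
      simp only [mul_def, uu_add hF.out]; ext <;> dsimp <;> ring)
    (fun x => by simp [mul_def, one_def, uu])
    (fun x => by
      have h2 : ∀ δ : ZMod 2, δ + δ = 0 := by decide
      simp [mul_def, inv_def, one_def, h2])

variable [hF : Fact (4 ≤ n)]

def A (n : ℕ) : QD n := ⟨1, 0⟩
def B (n : ℕ) : QD n := ⟨0, 1⟩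

lemma A_pow (k : ℕ) : (A n) ^ k = ⟨(k : ZMod (2 ^ (n - 1))), 0⟩ := by
  induction k with
  | zero => simp [one_def]
  | succ m ih => rw [pow_succ, ih, mul_def]; ext <;> simp [A, uu]

lemma B_pow (k : ℕ) : (B n) ^ k = ⟨0, (k : ZMod 2)⟩ := by
  induction k with
  | zero => simp [one_def]
  | succ m ih => rw [pow_succ, ih, mul_def]; ext <;> simp [B]

lemma B_sq : (B n) * (B n) = 1 := by
  rw [mul_def]; ext <;> simp [B, one_def]
  decide

lemma B_inv : (B n)⁻¹ = B n := by
  rw [inv_def]; ext <;> simp [B]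

lemma rr_cast : ((2 ^ (n - 2) - 1 : ℕ) : ZMod (2 ^ (n - 1))) = rr n := by
  have h1 : (1 : ℕ) ≤ 2 ^ (n - 2) := Nat.one_le_two_pow
  rw [Nat.cast_sub h1, rr]
  push_cast
  ring

lemma BAB : (B n) * (A n) * (B n)⁻¹ = (A n) ^ (2 ^ (n - 2) - 1) := by
  rw [B_inv, A_pow, rr_cast, mul_def, mul_def]
  ext <;> simp [A, B, uu]
  decide

set_option linter.unusedSectionVars false

/-- `2^(n-3) - 1` is a unit mod `2^(n-1)` -/
lemma c_isUnit (hn : 4 ≤ n) : IsUnit ((2 ^ (n - 3) - 1 : ℕ) : ZMod (2 ^ (n - 1))) := by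
  rw [ZMod.isUnit_iff_coprime]
  apply Nat.Coprime.pow_right
  rw [Nat.coprime_two_right]
  have h1 : (2 : ℕ) ^ (n - 3) = 2 * 2 ^ (n - 4) := by
    have : n - 3 = (n - 4) + 1 := by omega
    rw [this, pow_succ, mul_comm]
  refine ⟨2 ^ (n - 4) - 1, ?_⟩
  have h2 : (1:ℕ) ≤ 2 ^ (n - 4) := Nat.one_le_two_pow
  omega

lemma rr_sub_one (hn : 4 ≤ n) :
    rr n - 1 = 2 * ((2 ^ (n - 3) - 1 : ℕ) : ZMod (2 ^ (n - 1))) := by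
  have h2 : (1:ℕ) ≤ 2 ^ (n - 3) := Nat.one_le_two_pow
  rw [rr, Nat.cast_sub h2]
  push_cast
  have h1 : (2 : ZMod (2 ^ (n-1))) ^ (n - 2) = 2 * 2 ^ (n - 3) := by
    have : n - 2 = (n - 3) + 1 := by omega
    rw [this, pow_succ]; ring
  rw [h1]; ring

/-- key cancelation : `(rr - 1) * x = 0 ↔ 2 * x = 0` -/
lemma key_cancel (hn : 4 ≤ n) (x : ZMod (2 ^ (n - 1))) :
    (rr n - 1) * x = 0 ↔ 2 * x = 0 := by
  rw [rr_sub_one hn]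
  constructor
  · intro h
    have h2 : ((2 ^ (n - 3) - 1 : ℕ) : ZMod (2 ^ (n - 1))) * (2 * x) = 0 := by
      linear_combination h
    rcases (c_isUnit hn) with ⟨u, hu⟩
    rw [← hu] at h2
    exact (Units.mul_right_eq_zero u).mp h2
  · intro h
    calc 2 * ((2 ^ (n - 3) - 1 : ℕ) : ZMod (2 ^ (n - 1))) * x
        = ((2 ^ (n - 3) - 1 : ℕ) : ZMod (2 ^ (n - 1))) * (2 * x) := by ring
      _ = 0 := by rw [h, mul_zero]

/-- `2x = 0` iff `x = 0` or `x = 2^(n-2)` -/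
lemma two_mul_eq_zero (hn : 4 ≤ n) (x : ZMod (2 ^ (n - 1))) :
    2 * x = 0 ↔ x = 0 ∨ x = ((2 ^ (n - 2) : ℕ) : ZMod (2 ^ (n - 1))) := by
  have hN : (2:ℕ) ^ (n - 1) = 2 * 2 ^ (n - 2) := by
    have : n - 1 = (n - 2) + 1 := by omega
    rw [this, pow_succ, mul_comm]
  constructor
  · intro h
    have hx : x = ((x.val : ℕ) : ZMod (2 ^ (n - 1))) := (ZMod.natCast_rightInverse x).symm
    have h2 : ((2 * x.val : ℕ) : ZMod (2 ^ (n - 1))) = 0 := by push_cast; rw [← hx]; exact h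
    rw [ZMod.natCast_eq_zero_iff] at h2
    have h2' : 2 * 2 ^ (n - 2) ∣ 2 * x.val := by rw [← hN]; exact h2
    have h3 : 2 ^ (n - 2) ∣ x.val := (mul_dvd_mul_iff_left (two_ne_zero)).mp h2'
    obtain ⟨k, hk⟩ := h3
    have hlt : x.val < 2 * 2 ^ (n - 2) := by rw [← hN]; exact ZMod.val_lt x
    have hk2 : k < 2 := by
      by_contra hc
      push_neg at hc
      have : 2 * 2 ^ (n - 2) ≤ 2 ^ (n - 2) * k := by
        calc 2 * 2 ^ (n - 2) = 2 ^ (n - 2) * 2 := by ring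
        _ ≤ 2 ^ (n - 2) * k := Nat.mul_le_mul_left _ hc
      omega
    interval_cases k
    · left; rw [hx, hk]; simp
    · right; rw [hx, hk]; simp
  · rintro (h | h)
    · rw [h, mul_zero]
    · rw [h]
      have := two_mul_M hn
      rw [← cast_pow_eq] at this
      exact this

def MM (n : ℕ) : ZMod (2 ^ (n - 1)) := ((2 ^ (n - 2) : ℕ) : ZMod (2 ^ (n - 1)))

lemma MM_ne_zero (hn : 4 ≤ n) : MM n ≠ 0 := by
  intro h
  rw [MM, ZMod.natCast_eq_zero_iff] at h
  have h1 : (2:ℕ) ^ (n - 2) < 2 ^ (n - 1) := Nat.pow_lt_pow_right one_lt_two (by omega)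
  have h2 : (0:ℕ) < 2 ^ (n - 2) := Nat.pow_pos (by norm_num)
  exact absurd (Nat.le_of_dvd h2 h) (by omega)

lemma two_MM (hn : 4 ≤ n) : (2 : ZMod (2 ^ (n-1))) * MM n = 0 := by
  rw [MM, cast_pow_eq]; exact two_mul_M hn

/-- membership in the centre -/
lemma mem_center_iff (hn : 4 ≤ n) (x : QD n) :
    x ∈ Subgroup.center (QD n) ↔ x = ⟨0, 0⟩ ∨ x = ⟨MM n, 0⟩ := by
  rw [Subgroup.mem_center_iff]
  constructor
  · intro h
    -- from commuting with A : x.e = 0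
    have hA := h (A n)
    rw [mul_def, mul_def] at hA
    have hA1 : 1 + uu n 0 * x.i = x.i + uu n x.e * 1 := congrArg QD.i hA
    have he : x.e = 0 := by
      rcases z2cases x.e with h0 | h1
      · exact h0
      · exfalso
        rw [h1] at hA1
        simp [uu, A] at hA1
        -- hA1 : 1 + x.i = x.i + rr n  →  rr n = 1  → rr n - 1 = 0
        have hr1 : rr n - 1 = 0 := by linear_combination -hA1
        rw [rr_sub_one hn] at hr1
        rcases (c_isUnit hn) with ⟨u, hu⟩
        have : ((2:ZMod (2 ^ (n-1)))) * u = 0 := by rw [hu]; exact hr1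
        have h20 : (2 : ZMod (2 ^ (n-1))) = 0 := (Units.mul_left_eq_zero u).mp this
        have hd : (2:ℕ)^(n-1) ∣ 2 := by
          rw [← ZMod.natCast_eq_zero_iff]
          exact_mod_cast h20
        have : (2:ℕ)^(n-1) ≤ 2 := Nat.le_of_dvd (by norm_num) hd
        have : (2:ℕ)^2 ≤ 2^(n-1) := Nat.pow_le_pow_right (by norm_num) (by omega)
        omega
    -- from commuting with B : 2 * x.i = 0
    have hB := h (B n)
    rw [mul_def, mul_def] at hB
    have hB1 : 0 + uu n 1 * x.i = x.i + uu n x.e * 0 := congrArg QD.i hB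
    simp [uu, show (1 : ZMod 2) ≠ 0 by decide] at hB1
    have h2 : (rr n - 1) * x.i = 0 := by linear_combination hB1
    rw [key_cancel hn, two_mul_eq_zero hn] at h2
    rcases h2 with h2 | h2
    · left; ext <;> simp [h2, he]
    · right; ext <;> simp [h2, he, MM]
  · intro hx g
    have h2 : 2 * x.i = 0 := by
      rcases hx with h | h <;> rw [h]
      · simp
      · exact two_MM hn
    have he : x.e = 0 := by rcases hx with h | h <;> rw [h]
    rw [mul_def, mul_def, he]
    have huu : uu n g.e * x.i = x.i := by
      rcases z2cases g.e with h | h <;> simp [uu, h]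
      have := (key_cancel hn x.i).mpr h2
      linear_combination this
    refine QD.ext ?_ ?_
    · show g.i + uu n g.e * x.i = x.i + uu n 0 * g.i
      rw [huu, show uu n 0 = 1 from by simp [uu], one_mul]
      ring
    · show g.e + 0 = 0 + g.e
      ring

lemma MM_val (hn : 4 ≤ n) : (MM n).val = 2 ^ (n - 2) := by
  rw [MM]
  exact ZMod.val_cast_of_lt (Nat.pow_lt_pow_right one_lt_two (by omega))

lemma pair_iff (hn : 4 ≤ n) (i j : ZMod (2 ^ (n - 1))) :
    (i = j ∨ i = j + MM n) ↔ i.val % 2 ^ (n - 2) = j.val % 2 ^ (n - 2) := by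
  have hdvd : (2:ℕ) ^ (n - 2) ∣ 2 ^ (n - 1) := pow_dvd_pow 2 (by omega)
  have hN : (2:ℕ) ^ (n - 1) = 2 * 2 ^ (n - 2) := by
    have : n - 1 = (n - 2) + 1 := by omega
    rw [this, pow_succ, mul_comm]
  constructor
  · rintro (h | h)
    · rw [h]
    · rw [h, ZMod.val_add, MM_val hn, Nat.mod_mod_of_dvd _ hdvd, Nat.add_mod_right]
  · intro h
    have hmod : i.val ≡ j.val [MOD 2 ^ (n - 2)] := h
    have hi : ((i.val : ℕ) : ZMod (2 ^ (n-1))) = i := ZMod.natCast_rightInverse i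
    have hj : ((j.val : ℕ) : ZMod (2 ^ (n-1))) = j := ZMod.natCast_rightInverse j
    have hilt : i.val < 2 * 2 ^ (n - 2) := by rw [← hN]; exact ZMod.val_lt i
    have hjlt : j.val < 2 * 2 ^ (n - 2) := by rw [← hN]; exact ZMod.val_lt j
    rcases le_total i.val j.val with hle | hle
    · have hd : 2 ^ (n - 2) ∣ j.val - i.val := (Nat.modEq_iff_dvd' hle).mp hmod
      obtain ⟨k, hk⟩ := hd
      have hk2 : k < 2 := by
        by_contra hc
        push_neg at hc
        have h2 : 2 ^ (n-2) * 2 ≤ 2 ^ (n-2) * k := Nat.mul_le_mul_left _ hc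
        have h3 : 2 ^ (n-2) * k ≤ j.val := hk ▸ Nat.sub_le _ _
        have h4 : 2 ^ (n-2) * 2 ≤ j.val := le_trans h2 h3
        omega
      interval_cases k
      · left
        have : i.val = j.val := by omega
        rw [← hi, ← hj, this]
      · have hj' : j.val = i.val + 2 ^ (n - 2) := by omega
        have hji : j = i + MM n := by
          rw [← hj, hj', Nat.cast_add, hi, MM]
        right
        linear_combination - hji - two_MM hn
    · have hd : 2 ^ (n - 2) ∣ i.val - j.val := (Nat.modEq_iff_dvd' hle).mp hmod.symm
      obtain ⟨k, hk⟩ := hd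
      have hk2 : k < 2 := by
        by_contra hc
        push_neg at hc
        have h2 : 2 ^ (n-2) * 2 ≤ 2 ^ (n-2) * k := Nat.mul_le_mul_left _ hc
        have h3 : 2 ^ (n-2) * k ≤ i.val := hk ▸ Nat.sub_le _ _
        have h4 : 2 ^ (n-2) * 2 ≤ i.val := le_trans h2 h3
        omega
      interval_cases k
      · left
        have : i.val = j.val := by omega
        rw [← hi, ← hj, this]
      · right
        have hi' : i.val = j.val + 2 ^ (n - 2) := by omega
        rw [← hi, hi', Nat.cast_add, hj, MM]

lemma uu_one : uu n 1 = rr n := by simp [uu]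

/-- rotations commute -/
lemma comm_rot_rot (i j : ZMod (2 ^ (n-1))) :
    (⟨i, 0⟩ : QD n) * ⟨j, 0⟩ = (⟨j, 0⟩ : QD n) * ⟨i, 0⟩ := by
  rw [mul_def, mul_def]
  ext <;> simp [uu] <;> ring

/-- a rotation commutes with a reflection iff it is central -/
lemma comm_rot_refl_iff (hn : 4 ≤ n) (i j : ZMod (2 ^ (n-1))) :
    (⟨i, 0⟩ : QD n) * ⟨j, 1⟩ = (⟨j, 1⟩ : QD n) * ⟨i, 0⟩ ↔ 2 * i = 0 := by
  rw [mul_def, mul_def, QD.mk.injEq, show uu n 0 = 1 from by simp [uu], uu_one]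
  constructor
  · rintro ⟨h, -⟩
    rw [← key_cancel hn]
    linear_combination - h
  · intro h
    refine ⟨?_, by ring⟩
    have := (key_cancel hn i).mpr h
    linear_combination - this

/-- two reflections commute iff their rotation parts agree mod `2^(n-2)` -/
lemma comm_refl_refl_iff (hn : 4 ≤ n) (i j : ZMod (2 ^ (n-1))) :
    (⟨i, 1⟩ : QD n) * ⟨j, 1⟩ = (⟨j, 1⟩ : QD n) * ⟨i, 1⟩ ↔
      i.val % 2 ^ (n - 2) = j.val % 2 ^ (n - 2) := by
  rw [mul_def, mul_def, QD.mk.injEq, uu_one]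
  rw [← pair_iff hn]
  constructor
  · rintro ⟨h, -⟩
    have h2 : (rr n - 1) * (i - j) = 0 := by linear_combination - h
    rw [key_cancel hn, two_mul_eq_zero hn] at h2
    rcases h2 with h2 | h2
    · left; linear_combination h2
    · right; rw [MM]; linear_combination h2
  · intro h
    refine ⟨?_, rfl⟩
    have h2 : 2 * (i - j) = 0 := by
      rw [two_mul_eq_zero hn]
      rcases h with h | h
      · left; rw [h]; ring
      · right; rw [h, MM]; ring
    have h3 := (key_cancel hn (i - j)).mpr h2
    linear_combination - h3

/-- a rotation is non-central iff `2 * i ≠ 0` -/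
lemma rot_not_center_iff (hn : 4 ≤ n) (i : ZMod (2 ^ (n-1))) :
    (⟨i, 0⟩ : QD n) ∉ Subgroup.center (QD n) ↔ 2 * i ≠ 0 := by
  rw [mem_center_iff hn, ne_eq, two_mul_eq_zero hn]
  simp [QD.mk.injEq, MM]

/-- a reflection is never central -/
lemma refl_not_center (hn : 4 ≤ n) (i : ZMod (2 ^ (n-1))) :
    (⟨i, 1⟩ : QD n) ∉ Subgroup.center (QD n) := by
  rw [mem_center_iff hn]
  rintro (h | h) <;> exact one_ne_zero (congrArg QD.e h)

/-! ### The presented group is isomorphic to the concrete group -/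

section Presented

variable (n : ℕ) [hF : Fact (4 ≤ n)]

local notation "P" => PresentedGroup (qdRels n)
local notation "N" => (2 : ℕ) ^ (n - 1)
local notation "s" => (2 : ℕ) ^ (n - 2) - 1

def aa : P := PresentedGroup.of 0
def bb : P := PresentedGroup.of 1

lemma mk_rel {r : FreeGroup (Fin 2)} (h : r ∈ qdRels n) :
    PresentedGroup.mk (qdRels n) r = 1 :=
  (QuotientGroup.eq_one_iff r).mpr (Subgroup.subset_normalClosure h)

lemma rel_a : (aa n) ^ (2 ^ (n-1)) = 1 := by
  have h := mk_rel n (show (FreeGroup.of 0) ^ (2 ^ (n - 1)) ∈ qdRels n by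
    left; rfl)
  rw [map_pow] at h
  exact h

lemma rel_b : (bb n) * (bb n) = 1 := by
  have h := mk_rel n (show (FreeGroup.of 1) ^ 2 ∈ qdRels n by
    right; left; rfl)
  rw [map_pow, pow_two] at h
  exact h

lemma bb_inv : (bb n)⁻¹ = bb n := inv_eq_of_mul_eq_one_right (rel_b n)

lemma rel_ba : (bb n) * (aa n) = (aa n) ^ s * (bb n) := by
  have h := mk_rel n (show FreeGroup.of 1 * FreeGroup.of 0 * (FreeGroup.of 1)⁻¹ *
      ((FreeGroup.of 0) ^ (2 ^ (n - 2) - 1))⁻¹ ∈ qdRels n by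
    right; right; rfl)
  rw [map_mul, map_mul, map_mul, map_inv, map_inv, map_pow, mul_inv_eq_one] at h
  have h' : bb n * aa n * (bb n)⁻¹ = aa n ^ s := h
  calc bb n * aa n = bb n * aa n * (bb n)⁻¹ * bb n := by group
    _ = aa n ^ s * bb n := by rw [h']

lemma rel_ba_pow (k : ℕ) : (bb n) * (aa n) ^ k = (aa n) ^ (k * s) * (bb n) := by
  induction k with
  | zero => simp
  | succ m ih =>
    rw [pow_succ, ← mul_assoc, ih, mul_assoc, rel_ba, ← mul_assoc, ← pow_add]
    congr 2
    ring

lemma a_mod (k : ℕ) : (aa n) ^ k = (aa n) ^ (k % N) := pow_eq_pow_mod _ (rel_a n)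

lemma b_mod (k : ℕ) : (bb n) ^ k = (bb n) ^ (k % 2) :=
  pow_eq_pow_mod _ (by rw [pow_two]; exact rel_b n)

lemma a_inv (i : ℕ) : ((aa n) ^ i)⁻¹ = (aa n) ^ (i * (N - 1)) := by
  refine inv_eq_of_mul_eq_one_right ?_
  rw [← pow_add]
  have h2 : (1:ℕ) ≤ N := Nat.one_le_two_pow
  have h1 : i + i * (N - 1) = N * i := by
    calc i + i * (N - 1) = i * ((N - 1) + 1) := by ring
      _ = i * N := by rw [Nat.sub_add_cancel h2]
      _ = N * i := Nat.mul_comm _ _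
  rw [h1, pow_mul, rel_a, one_pow]

/-- every element of the presented group has the form `a^i * b^e` -/
lemma exists_rep (g : P) : ∃ i e : ℕ, g = (aa n) ^ i * (bb n) ^ e := by
  let S : Subgroup P :=
    { carrier := {g | ∃ i e : ℕ, g = (aa n) ^ i * (bb n) ^ e}
      one_mem' := ⟨0, 0, by simp⟩
      mul_mem' := by
        rintro x y ⟨i, e, rfl⟩ ⟨j, f, rfl⟩
        rcases Nat.mod_two_eq_zero_or_one e with he | he
        · refine ⟨i + j, f, ?_⟩
          rw [b_mod n e, he, pow_zero, mul_one, ← mul_assoc, ← pow_add]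
        · refine ⟨i + j * s, 1 + f, ?_⟩
          rw [b_mod n e, he, pow_one]
          calc aa n ^ i * bb n * (aa n ^ j * bb n ^ f)
              = aa n ^ i * (bb n * aa n ^ j) * bb n ^ f := by group
            _ = aa n ^ i * (aa n ^ (j * s) * bb n) * bb n ^ f := by rw [rel_ba_pow]
            _ = aa n ^ (i + j * s) * bb n ^ (1 + f) := by
                rw [pow_add, pow_add, pow_one]; group
      inv_mem' := by
        rintro x ⟨i, e, rfl⟩
        rcases Nat.mod_two_eq_zero_or_one e with he | he
        · refine ⟨i * (N - 1), 0, ?_⟩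
          rw [b_mod n e, he, pow_zero, mul_one, a_inv]
          exact (mul_one _).symm
        · refine ⟨i * (N - 1) * s, 1, ?_⟩
          rw [b_mod n e, he, pow_one, mul_inv_rev, bb_inv, a_inv, rel_ba_pow] }
  exact PresentedGroup.generated_by (qdRels n) S
    (fun j => by
      fin_cases j
      · exact ⟨1, 0, by simp [aa]⟩
      · exact ⟨0, 1, by simp [bb]⟩) g

end Presented

section Phi

variable (n : ℕ) [hF : Fact (4 ≤ n)]

local notation "P" => PresentedGroup (qdRels n)

def ff : Fin 2 → QD n := fun x => if x = 0 then A n else B n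

lemma hrels : ∀ r ∈ qdRels n, FreeGroup.lift (ff n) r = 1 := by
  intro r hr
  rcases hr with h | h | h
  · subst h
    rw [map_pow, FreeGroup.lift_apply_of]
    show (A n) ^ (2 ^ (n-1)) = 1
    rw [A_pow, one_def, ZMod.natCast_self]
  · subst h
    rw [map_pow]
    rw [FreeGroup.lift_apply_of]
    show (B n) ^ 2 = 1
    rw [pow_two]
    exact B_sq
  · rw [Set.mem_singleton_iff] at h
    subst h
    rw [map_mul, map_mul, map_mul, map_inv, map_inv, map_pow, mul_inv_eq_one,
      FreeGroup.lift_apply_of, FreeGroup.lift_apply_of]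
    show (B n) * (A n) * (B n)⁻¹ = (A n) ^ (2 ^ (n - 2) - 1)
    exact BAB

def phi : P →* QD n := PresentedGroup.toGroup (hrels n)

lemma phi_a : phi n (aa n) = A n := PresentedGroup.toGroup.of (hrels n)
lemma phi_b : phi n (bb n) = B n := by
  have h : phi n (PresentedGroup.of 1) = ff n 1 := PresentedGroup.toGroup.of (hrels n)
  rw [show bb n = PresentedGroup.of 1 from rfl, h]
  simp [ff]

lemma phi_rep (i e : ℕ) :
    phi n ((aa n) ^ i * (bb n) ^ e) =
      ⟨(i : ZMod (2 ^ (n - 1))), (e : ZMod 2)⟩ := by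
  rw [map_mul, map_pow, map_pow, phi_a, phi_b, A_pow, B_pow, mul_def]
  ext <;> simp [uu]

lemma phi_bijective : Function.Bijective (phi n) := by
  constructor
  · intro g g' h
    obtain ⟨i, e, rfl⟩ := exists_rep n g
    obtain ⟨j, f, rfl⟩ := exists_rep n g'
    rw [phi_rep, phi_rep] at h
    have hi : ((i : ℕ) : ZMod (2 ^ (n-1))) = ((j : ℕ) : ZMod (2 ^ (n-1))) :=
      congrArg QD.i h
    have he : ((e : ℕ) : ZMod 2) = ((f : ℕ) : ZMod 2) := congrArg QD.e h
    rw [ZMod.natCast_eq_natCast_iff'] at hi he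
    rw [a_mod n i, a_mod n j, hi, b_mod n e, b_mod n f, he]
  · intro x
    refine ⟨(aa n) ^ (x.i.val) * (bb n) ^ (x.e.val), ?_⟩
    rw [phi_rep]
    ext
    · exact ZMod.natCast_rightInverse x.i
    · exact ZMod.natCast_rightInverse x.e

noncomputable def qdEquiv : P ≃* QD n := MulEquiv.ofBijective (phi n) (phi_bijective n)

end Phi

/-! ### Graph isomorphism induced by a group isomorphism -/

lemma center_map_iff {G H : Type*} [Group G] [Group H] (e : G ≃* H) (g : G) :
    e g ∈ Subgroup.center H ↔ g ∈ Subgroup.center G := by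
  rw [Subgroup.mem_center_iff, Subgroup.mem_center_iff]
  constructor
  · intro h k
    apply e.injective
    rw [map_mul, map_mul]
    exact h (e k)
  · intro h k
    have := congrArg e (h (e.symm k))
    rwa [map_mul, map_mul, MulEquiv.apply_symm_apply] at this

noncomputable def noncommGraphIso {G H : Type*} [Group G] [Group H] (e : G ≃* H) :
    noncommGraph G ≃g noncommGraph H where
  toEquiv := e.toEquiv.subtypeEquiv (fun g => by
    rw [not_iff_not]
    exact (center_map_iff e g).symm)
  map_rel_iff' := by
    intro u v
    show e u.1 * e v.1 ≠ e v.1 * e u.1 ↔ _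
    rw [← map_mul, ← map_mul, ne_eq, e.injective.eq_iff]
    rfl

/-! ### vertex bijection -/

section Vertices

variable (n : ℕ) [hF : Fact (4 ≤ n)]

local notation "M" => (2 : ℕ) ^ (n - 2)

abbrev Vtx := Σ i : Fin (2 ^ (n - 2) + 1), Fin (if i = 0 then 2 ^ (n - 1) - 2 else 2)

def rotVal (t : ℕ) : ℕ := if t < 2 ^ (n - 2) - 1 then t + 1 else t + 2

lemma hNM : (2:ℕ) ^ (n - 1) = 2 * 2 ^ (n - 2) := by
  have h4 := hF.out
  have : n - 1 = (n - 2) + 1 := by omega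
  rw [this, pow_succ, mul_comm]

lemma M_pos : 0 < (2:ℕ) ^ (n - 2) := Nat.pow_pos (by norm_num)

lemma M_big : 4 ≤ (2:ℕ) ^ (n - 2) := by
  have h4 := hF.out
  calc (4:ℕ) = 2 ^ 2 := by norm_num
    _ ≤ 2 ^ (n - 2) := Nat.pow_le_pow_right (by norm_num) (by omega)

lemma rotVal_lt {t : ℕ} (ht : t < 2 ^ (n - 1) - 2) : rotVal n t < 2 ^ (n - 1) := by
  have h1 := hNM n
  have h2 := M_pos n
  rw [rotVal]
  split <;> omega

lemma rotVal_pos (t : ℕ) : 0 < rotVal n t := by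
  rw [rotVal]; split <;> omega

lemma rotVal_ne_M {t : ℕ} (ht : t < 2 ^ (n - 1) - 2) : rotVal n t ≠ M := by
  have h1 := hNM n
  have h2 := M_pos n
  rw [rotVal]
  split <;> omega

lemma rotVal_inj {t t' : ℕ} (h : rotVal n t = rotVal n t') : t = t' := by
  rw [rotVal, rotVal] at h
  split at h <;> split at h <;> omega

/-- the vertex map -/
def FF (x : Vtx n) : QD n :=
  if x.1 = 0 then ⟨((rotVal n x.2.val : ℕ) : ZMod (2 ^ (n-1))), 0⟩
  else ⟨(((x.1.val - 1) + x.2.val * M : ℕ) : ZMod (2 ^ (n-1))), 1⟩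

lemma vtx_lt0 (x : Vtx n) (h : x.1 = 0) : x.2.val < 2 ^ (n - 1) - 2 := by
  simpa [h] using x.2.isLt

lemma vtx_lt1 (x : Vtx n) (h : x.1 ≠ 0) : x.2.val < 2 := by
  simpa [h] using x.2.isLt

lemma refl_val_lt (x : Vtx n) (h : x.1 ≠ 0) :
    (x.1.val - 1) + x.2.val * M < 2 ^ (n - 1) := by
  have h1 := hNM n
  have h2 := M_pos n
  have h3 : x.1.val < M + 1 := x.1.isLt
  have h4 := vtx_lt1 n x h
  have h5 : x.2.val * M ≤ 1 * M := Nat.mul_le_mul_right _ (by omega)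
  omega

/-- value of the rotation component for a reflection vertex -/
lemma FF_refl_val (x : Vtx n) (h : x.1 ≠ 0) :
    ((((x.1.val - 1) + x.2.val * M : ℕ) : ZMod (2 ^ (n-1)))).val
      = (x.1.val - 1) + x.2.val * M :=
  ZMod.val_cast_of_lt (refl_val_lt n x h)

lemma FF_refl_val_mod (x : Vtx n) (h : x.1 ≠ 0) :
    ((((x.1.val - 1) + x.2.val * M : ℕ) : ZMod (2 ^ (n-1)))).val % M
      = x.1.val - 1 := by
  rw [FF_refl_val n x h, Nat.add_mul_mod_self_right]
  apply Nat.mod_eq_of_lt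
  have h3 : x.1.val < M + 1 := x.1.isLt
  have h2 := M_pos n
  omega

lemma rot_two_mul_ne (x : Vtx n) (h : x.1 = 0) :
    2 * ((rotVal n x.2.val : ℕ) : ZMod (2 ^ (n-1))) ≠ 0 := by
  have ht := vtx_lt0 n x h
  have hlt := rotVal_lt n ht
  have hv : ((rotVal n x.2.val : ℕ) : ZMod (2 ^ (n-1))).val = rotVal n x.2.val :=
    ZMod.val_cast_of_lt hlt
  rw [ne_eq, two_mul_eq_zero hF.out]
  rintro (hc | hc)
  · rw [hc, ZMod.val_zero] at hv
    have := rotVal_pos n (x.2.val : ℕ)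
    omega
  · rw [hc] at hv
    have hv' : (MM n).val = rotVal n x.2.val := hv
    rw [MM_val hF.out] at hv'
    exact rotVal_ne_M n ht hv'.symm

lemma FF_not_center (x : Vtx n) : FF n x ∉ Subgroup.center (QD n) := by
  rw [FF]
  split
  · next h =>
    rw [rot_not_center_iff hF.out]
    exact rot_two_mul_ne n x h
  · exact refl_not_center hF.out _

lemma vtx_ext {x y : Vtx n} (h1 : x.1 = y.1) (h2 : x.2.val = y.2.val) : x = y :=
  Sigma.ext h1 ((Fin.heq_ext_iff (by rw [h1])).mpr h2)

lemma FF_injective : Function.Injective (FF n) := by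
  intro x y h
  rw [FF, FF] at h
  by_cases h0 : x.1 = 0 <;> by_cases h0' : y.1 = 0
  · -- both rotations
    rw [if_pos h0, if_pos h0'] at h
    have hi := congrArg QD.i h
    dsimp at hi
    have l1 := rotVal_lt n (vtx_lt0 n x h0)
    have l2 := rotVal_lt n (vtx_lt0 n y h0')
    have hr : rotVal n x.2.val = rotVal n y.2.val := by
      have := congrArg ZMod.val hi
      rwa [ZMod.val_cast_of_lt l1, ZMod.val_cast_of_lt l2] at this
    exact vtx_ext n (h0.trans h0'.symm) (rotVal_inj n hr)
  · rw [if_pos h0, if_neg h0'] at h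
    exact absurd (congrArg QD.e h).symm one_ne_zero
  · rw [if_neg h0, if_pos h0'] at h
    exact absurd (congrArg QD.e h) one_ne_zero
  · -- both reflections
    rw [if_neg h0, if_neg h0'] at h
    have hi := congrArg QD.i h
    dsimp at hi
    have l1 := refl_val_lt n x h0
    have l2 := refl_val_lt n y h0'
    have hval : (x.1.val - 1) + x.2.val * M = (y.1.val - 1) + y.2.val * M := by
      have := congrArg ZMod.val hi
      rwa [ZMod.val_cast_of_lt l1, ZMod.val_cast_of_lt l2] at this
    have hj2 := vtx_lt1 n x h0
    have hj2' := vtx_lt1 n y h0'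
    have hk1 : 1 ≤ x.1.val := Nat.pos_of_ne_zero (fun hc => h0 (Fin.ext hc))
    have hk1' : 1 ≤ y.1.val := Nat.pos_of_ne_zero (fun hc => h0' (Fin.ext hc))
    have hkM : x.1.val < M + 1 := x.1.isLt
    have hkM' : y.1.val < M + 1 := y.1.isLt
    have hMpos := M_pos n
    interval_cases hj : x.2.val <;> interval_cases hj' : y.2.val <;>
        simp only [Nat.zero_mul, Nat.one_mul, Nat.add_zero] at hval <;>
        first
        | exact vtx_ext n (Fin.ext (by omega)) (by omega)
        | omega

lemma FF_adj (x y : Vtx n) :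
    FF n x * FF n y ≠ FF n y * FF n x ↔ x.1 ≠ y.1 := by
  by_cases h0 : x.1 = 0 <;> by_cases h0' : y.1 = 0
  · -- both rotations: commute, and same part
    rw [FF, FF, if_pos h0, if_pos h0']
    exact iff_of_false (fun hc => hc (comm_rot_rot _ _)) (by rw [h0, h0']; simp)
  · -- rotation vs reflection : adjacent, different parts
    rw [FF, FF, if_pos h0, if_neg h0']
    refine iff_of_true ?_ (by rw [h0]; exact fun hc => h0' hc.symm)
    rw [ne_eq, comm_rot_refl_iff hF.out]
    exact rot_two_mul_ne n x h0
  · rw [FF, FF, if_neg h0, if_pos h0']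
    refine iff_of_true ?_ (by rw [h0']; exact h0)
    rw [ne_eq, eq_comm, comm_rot_refl_iff hF.out]
    exact rot_two_mul_ne n y h0'
  · -- both reflections
    rw [FF, FF, if_neg h0, if_neg h0']
    rw [ne_eq, comm_refl_refl_iff hF.out]
    rw [FF_refl_val_mod n x h0, FF_refl_val_mod n y h0']
    have hk1 : 1 ≤ x.1.val := Nat.pos_of_ne_zero (fun hc => h0 (Fin.ext hc))
    have hk1' : 1 ≤ y.1.val := Nat.pos_of_ne_zero (fun hc => h0' (Fin.ext hc))
    constructor
    · intro h hc
      exact h (by rw [hc])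
    · intro h hc
      exact h (Fin.ext (by omega))

/-! ### cardinalities -/

noncomputable instance : Fintype (QD n) := Fintype.ofEquiv (ZMod (2 ^ (n-1)) × ZMod 2)
  { toFun := fun p => ⟨p.1, p.2⟩
    invFun := fun x => (x.i, x.e)
    left_inv := fun _ => rfl
    right_inv := fun _ => rfl }

lemma card_QD : Nat.card (QD n) = 2 ^ (n - 1) * 2 := by
  have e : QD n ≃ ZMod (2 ^ (n-1)) × ZMod 2 :=
    { toFun := fun x => (x.i, x.e)
      invFun := fun p => ⟨p.1, p.2⟩
      left_inv := fun _ => rfl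
      right_inv := fun _ => rfl }
  rw [Nat.card_congr e, Nat.card_prod, Nat.card_zmod, Nat.card_zmod]

lemma card_center : Nat.card {g : QD n // g ∈ Subgroup.center (QD n)} = 2 := by
  have e : {g : QD n // g ∈ Subgroup.center (QD n)} ≃
      (({⟨0,0⟩, ⟨MM n, 0⟩} : Set (QD n)) : Type _) :=
    Equiv.subtypeEquivRight (fun x => by
      rw [mem_center_iff hF.out]
      simp [Set.mem_insert_iff])
  rw [Nat.card_congr e, Nat.card_coe_set_eq, Set.ncard_pair]
  intro hc
  have := congrArg QD.i hc
  exact MM_ne_zero hF.out this.symm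

lemma card_noncenter :
    Nat.card {g : QD n // g ∉ Subgroup.center (QD n)} = 2 ^ (n - 1) * 2 - 2 := by
  classical
  rw [Nat.card_eq_fintype_card, Fintype.card_subtype_compl]
  rw [← Nat.card_eq_fintype_card (α := QD n), card_QD]
  rw [← Nat.card_eq_fintype_card
    (α := {g : QD n // g ∈ Subgroup.center (QD n)}), card_center]

lemma card_vtx : Nat.card (Vtx n) = 2 ^ (n - 1) * 2 - 2 := by
  rw [Nat.card_eq_fintype_card, Fintype.card_sigma]
  have hsum : ∑ i : Fin (2 ^ (n - 2) + 1),
      Fintype.card (Fin (if i = 0 then 2 ^ (n - 1) - 2 else 2))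
      = (2 ^ (n - 1) - 2) + 2 ^ (n - 2) * 2 := by
    rw [← Finset.add_sum_erase _ _ (Finset.mem_univ (0 : Fin (2 ^ (n - 2) + 1)))]
    rw [Finset.sum_congr rfl (fun i hi => by
      rw [Fintype.card_fin, if_neg (Finset.ne_of_mem_erase hi)])]
    rw [Finset.sum_const, Finset.card_erase_of_mem (Finset.mem_univ _),
      Finset.card_univ, Fintype.card_fin, if_pos rfl, Fintype.card_fin]
    simp
  rw [hsum]
  have h1 := hNM n
  have h2 := M_pos n
  omega

def FF' (x : Vtx n) : {g : QD n // g ∉ Subgroup.center (QD n)} :=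
  ⟨FF n x, FF_not_center n x⟩

lemma FF'_bijective : Function.Bijective (FF' n) := by
  rw [Nat.bijective_iff_injective_and_card]
  refine ⟨fun x y h => FF_injective n (congrArg Subtype.val h), ?_⟩
  rw [card_vtx, card_noncenter]

/-- the non-commuting graph of the concrete group is the complete multipartite graph -/
noncomputable def isoQD : (SimpleGraph.completeMultipartiteGraph
      fun i : Fin (2 ^ (n - 2) + 1) => Fin (if i = 0 then 2 ^ (n - 1) - 2 else 2))
    ≃g noncommGraph (QD n) where
  toEquiv := Equiv.ofBijective (FF' n) (FF'_bijective n)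
  map_rel_iff' := by
    intro x y
    show FF n x * FF n y ≠ FF n y * FF n x ↔ _
    rw [FF_adj]
    rfl

end Vertices

end QDP

/-- For `n ≥ 4`, the non-commuting graph of the quasidihedral group `QD_{2^n}` is the
complete `(2^(n-2)+1)`-partite graph `K_{2^(n-1)-2,2,…,2}` with `2^(n-2)` parts of size 2. -/
theorem noncommGraph_quasidihedral (n : ℕ) (hn : 4 ≤ n) :
    Nonempty (noncommGraph (PresentedGroup (qdRels n)) ≃g
      SimpleGraph.completeMultipartiteGraph
        fun i : Fin (2 ^ (n - 2) + 1) => Fin (if i = 0 then 2 ^ (n - 1) - 2 else 2)) := by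
  haveI : Fact (4 ≤ n) := ⟨hn⟩
  exact ⟨(QDP.noncommGraphIso (QDP.qdEquiv n)).trans (QDP.isoQD n).symm⟩
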